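/- Let n ≥ 5, let V be a ℂ-vector space with dim_ℂ V = n−2, and let p : Fin(n−1) → V be in linear general position. Then for any two nonzero vectors a₁, a₂ ∈ V, there exists a subset S ⊆ Fin(n−1) with |S| = n−3 such that a₁ ∉ H_S and a₂ ∉ H_S. (Equivalently: no two points of ℙ^{n−3} together meet every hyperplane of the arrangement; this is the key step, proved by contradiction, in showing the arrangement is in hyperbolic-imbedding configuration.) -/

import Mathlib

open Submodule

namespace AvoidTwoAux

variable {n : ℕ} {V : Type*} [AddCommGroup V] [Module ℂ V]

lemma inter_span [FiniteDimensional ℂ V] (hn : 5 ≤ n)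
    (hdim : Module.finrank ℂ V = n - 2) (p : Fin (n - 1) → V)
    (hgen : ∀ T : Finset (Fin (n - 1)), T.card = n - 2 →
      LinearIndependent ℂ (fun i : T => p (i : Fin (n - 1))))
    (A B : Finset (Fin (n - 1))) (hcard : (A ∪ B).card ≤ n - 2)
    (a : V) (hA : a ∈ span ℂ (p '' ↑A)) (hB : a ∈ span ℂ (p '' ↑B)) :
    a ∈ span ℂ (p '' ↑(A ∩ B)) := by
  obtain ⟨T, hsub, hT⟩ := Finset.exists_superset_card_eq hcard
    (by simp [Fintype.card_fin]; omega)
  have hTA : A ⊆ T := (Finset.subset_union_left).trans hsub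
  have hTB : B ⊆ T := (Finset.subset_union_right).trans hsub
  haveI : Nonempty ↥(T : Finset (Fin (n-1))) := by
    have : T.Nonempty := Finset.card_pos.mp (by omega)
    exact this.to_subtype
  let b : Module.Basis ↥T ℂ V := basisOfLinearIndependentOfCardEqFinrank (hgen T hT)
    (by rw [Fintype.card_coe, hT, hdim])
  have hb : ⇑b = fun i : T => p (i : Fin (n - 1)) :=
    coe_basisOfLinearIndependentOfCardEqFinrank _ _
  have himg : ∀ C : Finset (Fin (n - 1)), C ⊆ T →
      b '' (Subtype.val ⁻¹' (C : Set (Fin (n-1)))) = p '' ↑C := by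
    intro C hC
    rw [hb]
    have : (fun i : T => p (i : Fin (n - 1))) = p ∘ Subtype.val := rfl
    rw [this, Set.image_comp, Set.image_preimage_eq_inter_range, Subtype.range_coe]
    show p '' ((C : Set (Fin (n-1))) ∩ (T : Set (Fin (n-1)))) = p '' ↑C
    rw [Set.inter_eq_left.mpr (by exact_mod_cast hC : (C : Set (Fin (n-1))) ⊆ ↑T)]
  have hA' : a ∈ span ℂ (b '' (Subtype.val ⁻¹' (A : Set (Fin (n-1))))) := by
    rw [himg A hTA]; exact hA
  have hB' : a ∈ span ℂ (b '' (Subtype.val ⁻¹' (B : Set (Fin (n-1))))) := by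
    rw [himg B hTB]; exact hB
  rw [Module.Basis.mem_span_image] at hA' hB'
  have : a ∈ span ℂ (b '' (Subtype.val ⁻¹' ((A ∩ B : Finset (Fin (n-1))) : Set (Fin (n-1))))) := by
    rw [Module.Basis.mem_span_image]
    intro x hx
    have := hA' hx
    have := hB' hx
    simp only [Set.mem_preimage, Finset.coe_inter, Set.mem_inter_iff, Finset.mem_coe] at *
    tauto
  rwa [himg _ (Finset.inter_subset_left.trans hTA)] at this

lemma union_mem [FiniteDimensional ℂ V] (hn : 5 ≤ n)
    (hdim : Module.finrank ℂ V = n - 2) (p : Fin (n - 1) → V)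
    (hgen : ∀ T : Finset (Fin (n - 1)), T.card = n - 2 →
      LinearIndependent ℂ (fun i : T => p (i : Fin (n - 1))))
    (A B : Finset (Fin (n - 1))) (hAB : (A ∩ B).Nonempty) (a : V)
    (hA : a ∈ span ℂ (p '' ↑Aᶜ)) (hB : a ∈ span ℂ (p '' ↑Bᶜ)) :
    a ∈ span ℂ (p '' ↑(A ∪ B)ᶜ) := by
  have hc : (Aᶜ ∪ Bᶜ).card ≤ n - 2 := by
    rw [← Finset.compl_inter, Finset.card_compl, Fintype.card_fin]
    have := Finset.card_pos.mpr hAB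
    omega
  have h := inter_span hn hdim p hgen Aᶜ Bᶜ hc a hA hB
  rwa [← Finset.compl_union] at h


lemma clique_span [FiniteDimensional ℂ V] (hn : 5 ≤ n)
    (hdim : Module.finrank ℂ V = n - 2) (p : Fin (n - 1) → V)
    (hgen : ∀ T : Finset (Fin (n - 1)), T.card = n - 2 →
      LinearIndependent ℂ (fun i : T => p (i : Fin (n - 1))))
    (a : V) :
    ∀ k : ℕ, ∀ H : Finset (Fin (n - 1)), H.card = k → 2 ≤ k →
    (∀ i ∈ H, ∀ j ∈ H, i ≠ j →
      a ∈ span ℂ (p '' ↑(({i, j} : Finset (Fin (n - 1)))ᶜ))) →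
    a ∈ span ℂ (p '' ↑Hᶜ) := by
  intro k
  induction k with
  | zero => omega
  | succ m ih =>
    intro H hcard h2 hpair
    rcases Nat.lt_or_ge m 2 with hm | hm
    · have hc2 : H.card = 2 := by omega
      obtain ⟨i, j, hij, rfl⟩ := Finset.card_eq_two.mp hc2
      exact hpair i (by simp) j (by simp) hij
    · obtain ⟨x, hx⟩ := Finset.card_pos.mp (by omega : 0 < H.card)
      have hcard' : (H.erase x).card = m := by
        rw [Finset.card_erase_of_mem hx]; omega
      obtain ⟨i, hi⟩ := Finset.card_pos.mp (by omega : 0 < (H.erase x).card)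
      have hiH : i ∈ H := Finset.mem_of_mem_erase hi
      have hix : i ≠ x := Finset.ne_of_mem_erase hi
      have h1 := ih (H.erase x) hcard' hm (fun u hu v hv huv =>
        hpair u (Finset.mem_of_mem_erase hu) v (Finset.mem_of_mem_erase hv) huv)
      have h2' := hpair i hiH x hx hix
      have hne : (H.erase x ∩ ({i, x} : Finset (Fin (n - 1)))).Nonempty :=
        ⟨i, by simp [hi]⟩
      have hmem := union_mem hn hdim p hgen (H.erase x) {i, x} hne a h1 h2'
      have hU : H.erase x ∪ {i, x} = H := by
        ext y
        simp only [Finset.mem_union, Finset.mem_erase, Finset.mem_insert,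
          Finset.mem_singleton]
        constructor
        · rintro (⟨_, hy⟩ | rfl | rfl)
          · exact hy
          · exact hiH
          · exact hx
        · intro hy
          by_cases hyx : y = x
          · right; right; exact hyx
          · left; exact ⟨hyx, hy⟩
      rwa [hU] at hmem

end AvoidTwoAux


/-- for any two nonzero vectors there is an arrangement hyperplane
H_S (|S| = n-3) avoiding both. -/
theorem exists_hyperplane_avoiding_two_points
    (n : ℕ) (hn : 5 ≤ n) (V : Type*) [AddCommGroup V] [Module ℂ V]
    [FiniteDimensional ℂ V] (hdim : Module.finrank ℂ V = n - 2)
    (p : Fin (n - 1) → V)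
    (hgen : ∀ T : Finset (Fin (n - 1)), T.card = n - 2 →
      LinearIndependent ℂ (fun i : T => p (i : Fin (n - 1)))) :
    ∀ a₁ a₂ : V, a₁ ≠ 0 → a₂ ≠ 0 →
      ∃ S : Finset (Fin (n - 1)), S.card = n - 3 ∧
        a₁ ∉ Submodule.span ℂ (p '' (S : Set (Fin (n - 1)))) ∧
        a₂ ∉ Submodule.span ℂ (p '' (S : Set (Fin (n - 1)))) := by
  intro a₁ a₂ ha₁ ha₂
  by_contra hcon
  push_neg at hcon
  -- abbreviation for the relation
  set R : V → Fin (n - 1) → Fin (n - 1) → Prop := fun a i j =>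
    a ∈ Submodule.span ℂ (p '' ↑(({i, j} : Finset (Fin (n - 1)))ᶜ)) with hR
  have hsymm : ∀ a i j, R a i j → R a j i := by
    intro a i j h
    rw [hR] at *
    rwa [Finset.pair_comm]
  have key : ∀ i j : Fin (n - 1), i ≠ j → R a₁ i j ∨ R a₂ i j := by
    intro i j hij
    have hcard : (({i, j} : Finset (Fin (n - 1)))ᶜ).card = n - 3 := by
      rw [Finset.card_compl, Fintype.card_fin,
        Finset.card_insert_of_notMem (by simp [hij]), Finset.card_singleton]
      omega
    by_cases h1 : R a₁ i j
    · exact Or.inl h1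
    · exact Or.inr (hcon _ hcard h1)
  have htrans : ∀ a : V, ∀ i j k : Fin (n - 1), i ≠ j → j ≠ k → i ≠ k →
      R a i j → R a j k → R a i k := by
    intro a i j k hij hjk hik h1 h2
    have hne : (({i, j} : Finset (Fin (n - 1))) ∩ {j, k}).Nonempty :=
      ⟨j, by simp⟩
    have h3 := AvoidTwoAux.union_mem hn hdim p hgen {i, j} {j, k} hne a h1 h2
    refine Submodule.span_mono (Set.image_mono ?_) h3
    have : ({i, k} : Finset (Fin (n - 1))) ⊆ {i, j} ∪ {j, k} := by
      intro y hy
      simp only [Finset.mem_insert, Finset.mem_singleton, Finset.mem_union] at *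
      tauto
    exact_mod_cast Finset.compl_subset_compl.mpr this
  have univ_contra : ∀ a : V, a ≠ 0 →
      ¬ (∀ i j : Fin (n - 1), i ≠ j → R a i j) := by
    intro a ha hall
    have hcardu : (Finset.univ : Finset (Fin (n - 1))).card = n - 1 := by
      simp [Fintype.card_fin]
    have := AvoidTwoAux.clique_span hn hdim p hgen a (n - 1) Finset.univ hcardu
      (by omega) (fun i _ j _ hij => hall i j hij)
    rw [Finset.compl_univ] at this
    simp only [Finset.coe_empty, Set.image_empty, Submodule.span_empty,
      Submodule.mem_bot] at this
    exact ha this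
  have R2all : ∀ u v : Fin (n - 1), u ≠ v → R a₂ u v := by
    intro u v huv
    rcases key u v huv with h1 | h2
    · have hw : ∃ w, w ≠ u ∧ w ≠ v ∧ ¬ R a₁ u w := by
        by_contra hno
        push_neg at hno
        have hall1 : ∀ w, w ≠ u → R a₁ u w := by
          intro w hwu
          by_cases hwv : w = v
          · rw [hwv]; exact h1
          · exact hno w hwu hwv
        apply univ_contra a₁ ha₁
        intro i j hij
        by_cases hiu : i = u
        · have hju' : j ≠ u := fun h => hij (by rw [hiu, h])
          rw [hiu]; exact hall1 j hju'
        · by_cases hju : j = u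
          · rw [hju]; exact hsymm a₁ u i (hall1 i hiu)
          · exact htrans a₁ i u j (fun h => hiu h) (fun h => hju h.symm) hij
              (hsymm a₁ u i (hall1 i hiu)) (hall1 j hju)
      obtain ⟨w, hwu, hwv, hnw⟩ := hw
      have hnvw : ¬ R a₁ v w := fun h =>
        hnw (htrans a₁ u v w huv (Ne.symm hwv) (Ne.symm hwu) h1 h)
      have h2a : R a₂ u w := (key u w (Ne.symm hwu)).resolve_left hnw
      have h2b : R a₂ w v := (key w v hwv).resolve_left
        (fun h => hnvw (hsymm a₁ w v h))
      exact htrans a₂ u w v (Ne.symm hwu) hwv huv h2a h2b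
    · exact h2
  exact univ_contra a₂ ha₂ R2all
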